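/- Let A and B be ordered sets (finite multisets of reals in non-decreasing order) with A ≥ B, and let a, b be real numbers with a ≥ b. If either (i) b ≤ B[|B|] (b is at most the largest element of B) or (ii) |A| ≤ |B|, then the ordered sets A' = A ∪ {a} and B' = B ∪ {b} (obtained by inserting a into A and b into B while keeping non-decreasing order) satisfy A' ≥ B'. -/

import Mathlib

open List

/-- The `i`-th smallest element of a finite multiset of reals
(default `0` when out of range). -/
noncomputable def osIdx (X : Multiset ℝ) (i : ℕ) : ℝ :=
  (X.sort (· ≤ ·)).getD i 0

/-- `osLe B A` means `A ≥ B` as ordered sets: for every index `i` valid in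
both, the `i`-th smallest element of `A` is at least that of `B`. -/
def osLe (B A : Multiset ℝ) : Prop :=
  ∀ i : ℕ, i < Multiset.card A → i < Multiset.card B → osIdx B i ≤ osIdx A i

/-- Number of elements of `l` strictly below `x`. -/
noncomputable def kpos (x : ℝ) (l : List ℝ) : ℕ := l.countP (fun e => decide (e < x))

lemma kpos_le (x : ℝ) (l : List ℝ) : kpos x l ≤ l.length := List.countP_le_length

lemma getD_orderedInsert (x : ℝ) (l : List ℝ) (hs : l.Pairwise (· ≤ ·)) (i : ℕ) :
    (l.orderedInsert (· ≤ ·) x).getD i 0 =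
      if i < kpos x l then l.getD i 0
      else if i = kpos x l then x
      else l.getD (i - 1) 0 := by
  induction l generalizing i with
  | nil => simp [kpos]; rcases i with _ | j <;> simp
  | cons h t ih =>
    by_cases hxh : x ≤ h
    · rw [show (h :: t).orderedInsert (· ≤ ·) x = x :: h :: t by
        simp [List.orderedInsert, hxh]]
      have hk : kpos x (h :: t) = 0 := by
        rw [kpos, countP_eq_zero]
        intro e he
        rcases mem_cons.1 he with rfl | he
        · simp [not_lt.2 hxh]
        · simp [not_lt.2 (hxh.trans (List.rel_of_pairwise_cons hs he))]
      rw [hk]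
      rcases i with _ | j <;> simp
    · push_neg at hxh
      have hk : kpos x (h :: t) = kpos x t + 1 := by
        simp [kpos, countP_cons, hxh]
      rw [show (h :: t).orderedInsert (· ≤ ·) x = h :: t.orderedInsert (· ≤ ·) x by
        simp [List.orderedInsert, not_le.2 hxh]]
      rcases i with _ | j
      · simp [hk]
      · simp only [getD_cons_succ, ih hs.of_cons, hk]
        rcases lt_trichotomy j (kpos x t) with hj | hj | hj
        · rw [if_pos hj, if_pos (by omega)]
        · rw [if_neg (by omega), if_pos (by omega), if_neg (by omega), if_pos (by omega)]
        · rw [if_neg (by omega), if_neg (by omega), if_neg (by omega), if_neg (by omega)]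
          rcases j with _ | m
          · omega
          · simp

lemma getD_lt_of_lt_kpos {x : ℝ} {l : List ℝ} (hs : l.Pairwise (· ≤ ·)) {i : ℕ}
    (hi : i < kpos x l) : l.getD i 0 < x := by
  induction l generalizing i with
  | nil => simp [kpos] at hi
  | cons h t ih =>
    by_cases hxh : x ≤ h
    · exfalso
      have hk : kpos x (h :: t) = 0 := by
        rw [kpos, countP_eq_zero]
        intro e he
        rcases mem_cons.1 he with rfl | he
        · simp [not_lt.2 hxh]
        · simp [not_lt.2 (hxh.trans (List.rel_of_pairwise_cons hs he))]
      omega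
    · push_neg at hxh
      rcases i with _ | j
      · simpa using hxh
      · have : j < kpos x t := by
          have : kpos x (h :: t) = kpos x t + 1 := by simp [kpos, countP_cons, hxh]
          omega
        simpa using ih hs.of_cons this

lemma le_getD_of_kpos_le {x : ℝ} {l : List ℝ} (hs : l.Pairwise (· ≤ ·)) {j : ℕ}
    (hj : kpos x l ≤ j) (hj2 : j < l.length) : x ≤ l.getD j 0 := by
  induction l generalizing j with
  | nil => simp at hj2
  | cons h t ih =>
    by_cases hxh : x ≤ h
    · rcases j with _ | m
      · simpa using hxh
      · have hm : m < t.length := by simpa using hj2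
        have : kpos x t = 0 := by
          rw [kpos, countP_eq_zero]
          intro e he
          simp [not_lt.2 (hxh.trans (List.rel_of_pairwise_cons hs he))]
        simpa using ih hs.of_cons (by omega) hm
    · push_neg at hxh
      have hk : kpos x (h :: t) = kpos x t + 1 := by simp [kpos, countP_cons, hxh]
      rcases j with _ | m
      · omega
      · simpa using ih hs.of_cons (by omega) (by simpa using hj2)

lemma getD_mono {l : List ℝ} (hs : l.Pairwise (· ≤ ·)) {i j : ℕ} (hij : i ≤ j)
    (hj : j < l.length) : l.getD i 0 ≤ l.getD j 0 := by
  rw [getD_eq_getElem _ _ (lt_of_le_of_lt hij hj), getD_eq_getElem _ _ hj]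
  exact hs.rel_get_of_le hij

lemma sort_cons_eq (x : ℝ) (X : Multiset ℝ) :
    (x ::ₘ X).sort (· ≤ ·) = (X.sort (· ≤ ·)).orderedInsert (· ≤ ·) x := by
  refine List.Perm.eq_of_pairwise' (Multiset.pairwise_sort _ _)
    ((Multiset.pairwise_sort X (· ≤ ·)).orderedInsert x _) ?_
  refine ((Multiset.coe_eq_coe).1 ?_).trans (perm_orderedInsert _ x _).symm
  rw [Multiset.sort_eq, ← Multiset.cons_coe, Multiset.sort_eq]

theorem ordered_insert_pair (A B : Multiset ℝ) (a b : ℝ)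
    (hab : b ≤ a) (hAB : osLe B A)
    (h : (B ≠ 0 ∧ b ≤ osIdx B (Multiset.card B - 1)) ∨
          Multiset.card A ≤ Multiset.card B) :
    osLe (b ::ₘ B) (a ::ₘ A) := by
  intro i hiA hiB
  have hsA := Multiset.pairwise_sort A (· ≤ ·)
  have hsB := Multiset.pairwise_sort B (· ≤ ·)
  have hLA : (A.sort (· ≤ ·)).length = Multiset.card A := Multiset.length_sort _
  have hLB : (B.sort (· ≤ ·)).length = Multiset.card B := Multiset.length_sort _
  rw [Multiset.card_cons] at hiA hiB
  have hAB' : ∀ j, j < Multiset.card A → j < Multiset.card B →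
      (B.sort (· ≤ ·)).getD j 0 ≤ (A.sort (· ≤ ·)).getD j 0 := hAB
  show osIdx (b ::ₘ B) i ≤ osIdx (a ::ₘ A) i
  rw [osIdx, osIdx, sort_cons_eq, sort_cons_eq,
      getD_orderedInsert a _ hsA, getD_orderedInsert b _ hsB]
  set kA := kpos a (A.sort (· ≤ ·)) with hkA
  set kB := kpos b (B.sort (· ≤ ·)) with hkB
  have hkAle : kA ≤ Multiset.card A := hLA ▸ kpos_le a _
  have hkBle : kB ≤ Multiset.card B := hLB ▸ kpos_le b _
  rcases lt_trichotomy i kB with hB' | hB' | hB' <;>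
    rcases lt_trichotomy i kA with hA' | hA' | hA'
  · rw [if_pos hB', if_pos hA']
    exact hAB' i (by omega) (by omega)
  · rw [if_pos hB', if_neg (by omega), if_pos hA']
    exact le_of_lt (lt_of_lt_of_le (getD_lt_of_lt_kpos hsB hB') hab)
  · rw [if_pos hB', if_neg (by omega), if_neg (by omega)]
    refine le_trans (le_of_lt (lt_of_lt_of_le (getD_lt_of_lt_kpos hsB hB') hab)) ?_
    exact le_getD_of_kpos_le hsA (by omega) (by omega)
  · -- i = kB, i < kA : goal b ≤ LA.getD i
    rw [if_neg (by omega), if_pos hB', if_pos hA']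
    by_cases hiB2 : i < Multiset.card B
    · exact le_trans (le_getD_of_kpos_le hsB (le_of_eq hB'.symm) (by omega))
        (hAB' i (by omega) hiB2)
    · exfalso
      have hicard : i = Multiset.card B := by omega
      rcases h with ⟨hB0, hlast⟩ | hc
      · have hBpos : 0 < Multiset.card B := Multiset.card_pos.2 hB0
        have hlt : (B.sort (· ≤ ·)).getD (Multiset.card B - 1) 0 < b :=
          getD_lt_of_lt_kpos hsB (by omega)
        rw [osIdx] at hlast
        linarith
      · omega
  · rw [if_neg (by omega), if_pos hB', if_neg (by omega), if_pos hA']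
    exact hab
  · rw [if_neg (by omega), if_pos hB', if_neg (by omega), if_neg (by omega)]
    exact le_trans hab (le_getD_of_kpos_le hsA (by omega) (by omega))
  · rw [if_neg (by omega), if_neg (by omega), if_pos hA']
    exact le_trans (hAB' (i-1) (by omega) (by omega)) (getD_mono hsA (by omega) (by omega))
  · rw [if_neg (by omega), if_neg (by omega), if_neg (by omega), if_pos hA']
    exact le_of_lt (lt_of_le_of_lt (hAB' (i-1) (by omega) (by omega))
      (getD_lt_of_lt_kpos hsA (by omega)))
  · rw [if_neg (by omega), if_neg (by omega), if_neg (by omega), if_neg (by omega)]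
    exact hAB' (i-1) (by omega) (by omega)
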